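/- Let p ≥ 2 be an integer, r a real number with 0 < r < 1, and s ∈ ℝ^p with sᵢ > 0 for all i. For the variability weight vector w_w defined by (w_w)ᵢ = sᵢ / Σ_j s_j, one has Q_S(w_w, r) = p / ( (Σᵢ sᵢ)² · (1+(p−1)r) ); that is, the variance of the minimum-variance unbiased linear estimator of the variability weighted group effect τ_w = Σᵢ (w_w)ᵢ βᵢ under the general uniform model with unit error variance equals p/((Σᵢ sᵢ)²(1+(p−1)r)). -/

import Mathlib

open Matrix

/-- The `p × p` Gram/correlation matrix of a uniform model at multicollinearity
level `r`: diagonal entries `1`, off-diagonal entries `r`. -/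
noncomputable def unifMat (p : ℕ) (r : ℝ) : Matrix (Fin p) (Fin p) ℝ :=
  fun i j => if i = j then 1 else r

/-- `Q_S(w,r) = wᵀ S⁻¹ A(p,r)⁻¹ S⁻¹ w` with `S = diag s`: the variance of the
minimum-variance unbiased linear estimator of the group effect `ξ(w)` under the
general uniform model (variability `s_j` for variable `j`) with unit error
variance. -/
noncomputable def QSform (p : ℕ) (r : ℝ) (s w : Fin p → ℝ) : ℝ :=
  (fun i => w i / s i) ⬝ᵥ (unifMat p r)⁻¹.mulVec (fun i => w i / s i)

/-- for the variability weight vector `(w_w)ᵢ = sᵢ/Σ_j s_j`,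
`Q_S(w_w, r) = p/((Σᵢ sᵢ)²(1+(p−1)r))`. -/
theorem QS_variability_weight (p : ℕ) (hp : 2 ≤ p) (r : ℝ)
    (hr0 : 0 < r) (hr1 : r < 1) (s : Fin p → ℝ) (hs : ∀ i, 0 < s i) :
    QSform p r s (fun i => s i / ∑ j, s j) =
      (p : ℝ) / ((∑ i, s i) ^ 2 * (1 + ((p : ℝ) - 1) * r)) := by
  have hp2 : (2:ℝ) ≤ (p:ℝ) := by exact_mod_cast hp
  have hE : (0:ℝ) < 1 + ((p:ℝ) - 1) * r := by nlinarith
  have hEne : (1 + ((p:ℝ) - 1) * r) ≠ 0 := ne_of_gt hE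
  have h1r : (1:ℝ) - r ≠ 0 := by linarith
  obtain ⟨a, b, hab1, hab2, hab3⟩ :
      ∃ a b : ℝ, a + ((p:ℝ) - 1) * (r * b) = 1 ∧
        b + r * a + ((p:ℝ) - 2) * (r * b) = 0 ∧
        a + ((p:ℝ) - 1) * b = 1 / (1 + ((p:ℝ) - 1) * r) := by
    refine ⟨(1 + ((p:ℝ) - 2) * r) / ((1 - r) * (1 + ((p:ℝ) - 1) * r)),
      -r / ((1 - r) * (1 + ((p:ℝ) - 1) * r)), ?_, ?_, ?_⟩
    · linear_combination (mul_inv_cancel₀ (mul_ne_zero h1r hEne))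
    · field_simp
      ring
    · rw [eq_div_iff hEne]
      field_simp
      rw [mul_div_cancel_left₀ _ (by rw [mul_comm]; exact hEne : (1 + r * ((p:ℝ) - 1)) ≠ 0)]
      ring
  set B : Matrix (Fin p) (Fin p) ℝ := fun i j => if i = j then a else b with hB
  have hcardE : ∀ i : Fin p, ((Finset.univ.erase i).card : ℝ) = (p:ℝ) - 1 := by
    intro i
    rw [Finset.card_erase_of_mem (Finset.mem_univ i), Finset.card_univ, Fintype.card_fin]
    rw [Nat.cast_sub (by omega)]
    norm_num
  have hmul : unifMat p r * B = 1 := by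
    ext i j
    rw [Matrix.mul_apply]
    by_cases h : i = j
    · subst h
      rw [← Finset.add_sum_erase _ _ (Finset.mem_univ i)]
      rw [Finset.sum_congr rfl (fun k hk => show
          (unifMat p r i k) * B k i = r * b by
        obtain ⟨hki, -⟩ := Finset.mem_erase.mp hk
        simp [unifMat, hB, hki, Ne.symm hki])]
      rw [Finset.sum_const, nsmul_eq_mul, hcardE]
      simp only [unifMat, hB, if_pos rfl, Matrix.one_apply_eq, one_mul, if_true,
        eq_self_iff_true]
      linarith [hab1]
    · have hji : j ∈ Finset.univ.erase i := Finset.mem_erase.mpr ⟨Ne.symm h, Finset.mem_univ j⟩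
      rw [← Finset.add_sum_erase _ _ (Finset.mem_univ i),
          ← Finset.add_sum_erase _ _ hji]
      rw [Finset.sum_congr rfl (fun k hk => show
          (unifMat p r i k) * B k j = r * b by
        obtain ⟨hkj, hk'⟩ := Finset.mem_erase.mp hk
        obtain ⟨hki, -⟩ := Finset.mem_erase.mp hk'
        simp [unifMat, hB, hkj, Ne.symm hki])]
      rw [Finset.sum_const, nsmul_eq_mul,
        Finset.card_erase_of_mem hji,
        Finset.card_erase_of_mem (Finset.mem_univ i), Finset.card_univ, Fintype.card_fin]
      have hcast : (((p - 1 - 1 : ℕ)) : ℝ) = (p:ℝ) - 2 := by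
        have h1 : p - 1 - 1 = p - 2 := by omega
        rw [h1, Nat.cast_sub hp]
        norm_num
      rw [hcast]
      simp only [unifMat, hB, if_pos rfl, if_neg h, if_neg (Ne.symm h),
        Matrix.one_apply_ne h, one_mul, if_true, eq_self_iff_true]
      linarith [hab2]
  have hinv : (unifMat p r)⁻¹ = B := Matrix.inv_eq_right_inv hmul
  set T : ℝ := ∑ j, s j with hT
  have hTpos : 0 < T := Finset.sum_pos (fun i _ => hs i)
    ⟨⟨0, by omega⟩, Finset.mem_univ _⟩
  have hTne : T ≠ 0 := ne_of_gt hTpos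
  have hw : (fun i : Fin p => (s i / T) / s i) = fun _ : Fin p => 1 / T := by
    funext i
    rw [div_div, mul_comm, ← div_div, div_self (ne_of_gt (hs i))]
  unfold QSform
  rw [hinv]
  have hw' : (fun i => (fun i : Fin p => s i / T) i / s i) = fun _ : Fin p => 1 / T := hw
  rw [hw']
  have hrow : B.mulVec (fun _ : Fin p => 1 / T) =
      fun _ => (a + ((p:ℝ) - 1) * b) * (1 / T) := by
    funext i
    show ∑ k, B i k * (1 / T) = _
    rw [← Finset.add_sum_erase _ _ (Finset.mem_univ i)]
    rw [Finset.sum_congr rfl (fun k hk => show B i k * (1/T) = b * (1/T) by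
      obtain ⟨hki, -⟩ := Finset.mem_erase.mp hk
      simp [hB, Ne.symm hki])]
    rw [Finset.sum_const, nsmul_eq_mul, hcardE]
    simp only [hB, if_pos rfl]
    ring
  rw [hrow, hab3]
  show ∑ _i : Fin p, (1 / T) * (1 / (1 + ((p:ℝ) - 1) * r) * (1 / T)) = _
  rw [Finset.sum_const, Finset.card_univ, Fintype.card_fin, nsmul_eq_mul]
  field_simp
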